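/- For X in a unital C*-algebra 𝔄 and positive A ∈ 𝔄, X ∈ 𝔄^A (i.e. ‖X‖_A < ∞) if and only if there exist c > 0 and U ∈ 𝔄 with A^{1/2} X = U A^{1/4} and U* U ≤ c A^{1/2}. -/

import Mathlib

open scoped ComplexOrder ENNReal

/-- A state on a C*-algebra: a positive continuous linear functional of norm one. -/
def IsState {𝔄 : Type*} [NormedRing 𝔄] [StarRing 𝔄] [NormedAlgebra ℂ 𝔄]
    (f : 𝔄 →L[ℂ] ℂ) : Prop :=
  ‖f‖ = 1 ∧ ∀ a : 𝔄, 0 ≤ f (star a * a)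

/-- The `A`-operator seminorm `‖X‖_A`, as a value in `[0, ∞]`:
the supremum over states `f` with `f A ≠ 0` of `√(f(X* A X) / f(A))`. -/
noncomputable def Anorm {𝔄 : Type*} [NormedRing 𝔄] [StarRing 𝔄] [NormedAlgebra ℂ 𝔄]
    (A X : 𝔄) : ℝ≥0∞ :=
  ⨆ f : {f : 𝔄 →L[ℂ] ℂ // IsState f ∧ f A ≠ 0},
    ENNReal.ofReal (Real.sqrt ((f.1 (star X * A * X)).re / (f.1 A).re))

section Aux

variable {𝔄 : Type*} [CStarAlgebra 𝔄] [PartialOrder 𝔄] [StarOrderedRing 𝔄]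

open Pointwise

/-! ### Basic facts about states -/

lemma IsState.apply_nonneg {f : 𝔄 →L[ℂ] ℂ} (hf : IsState f) {a : 𝔄} (ha : 0 ≤ a) :
    0 ≤ f a := by
  have h1 : CFC.sqrt a * CFC.sqrt a = a := CFC.sqrt_mul_sqrt_self a ha
  have h2 : star (CFC.sqrt a) = CFC.sqrt a :=
    (IsSelfAdjoint.of_nonneg (CFC.sqrt_nonneg _)).star_eq
  calc (0 : ℂ) ≤ f (star (CFC.sqrt a) * CFC.sqrt a) := hf.2 _
  _ = f a := by rw [h2, h1]

lemma IsState.re_nonneg {f : 𝔄 →L[ℂ] ℂ} (hf : IsState f) {a : 𝔄} (ha : 0 ≤ a) :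
    0 ≤ (f a).re ∧ (f a).im = 0 := by
  have := hf.apply_nonneg ha
  rw [Complex.le_def] at this
  exact ⟨this.1, this.2.symm⟩

lemma IsState.re_mono {f : 𝔄 →L[ℂ] ℂ} (hf : IsState f) {a b : 𝔄} (hab : a ≤ b) :
    (f a).re ≤ (f b).re := by
  have h := (hf.re_nonneg (sub_nonneg.2 hab)).1
  rw [map_sub] at h
  simpa [sub_nonneg] using h

/-! ### Norm-one unital functionals are states -/

lemma im_eq_zero_of_norm_le_one [Nontrivial 𝔄] {f : 𝔄 →L[ℂ] ℂ} (hf : ‖f‖ ≤ 1) (h1 : f 1 = 1)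
    {x : 𝔄} (hx : IsSelfAdjoint x) : (f x).im = 0 := by
  set v : ℂ := f x with hv
  have key : ∀ t : ℝ, v.re ^ 2 + (v.im + t) ^ 2 ≤ ‖x‖ ^ 2 + t ^ 2 := by
    intro t
    set c : ℂ := (t : ℂ) * Complex.I with hc
    have hstarc : star c = -c := by simp [hc]
    have hstar : star (x + c • 1) = x + (-c) • 1 := by
      rw [star_add, star_smul, star_one, hx.star_eq, hstarc]
    have hcc : (-c) * c = (t : ℂ) ^ 2 := by
      rw [hc]; linear_combination (-(t:ℂ)^2) * Complex.I_sq
    have hprod : star (x + c • 1) * (x + c • 1) = x * x + ((t : ℂ) ^ 2) • 1 := by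
      rw [hstar, ← hcc]
      simp only [add_mul, mul_add, smul_mul_assoc, mul_smul_comm, mul_one, one_mul,
        smul_smul]
      module
    have hnorm2 : ‖x + c • 1‖ ^ 2 ≤ ‖x‖ ^ 2 + t ^ 2 := by
      have e1 : ‖x + c • 1‖ ^ 2 = ‖star (x + c • 1) * (x + c • 1)‖ := by
        rw [CStarRing.norm_star_mul_self, sq]
      rw [e1, hprod]
      calc ‖x * x + ((t : ℂ) ^ 2) • 1‖ ≤ ‖x * x‖ + ‖((t : ℂ) ^ 2) • (1 : 𝔄)‖ :=
            norm_add_le _ _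
      _ ≤ ‖x‖ ^ 2 + t ^ 2 := by
          have e2 : ‖x * x‖ = ‖x‖ ^ 2 := by
            calc ‖x * x‖ = ‖star x * x‖ := by rw [hx.star_eq]
            _ = ‖x‖ * ‖x‖ := CStarRing.norm_star_mul_self
            _ = ‖x‖ ^ 2 := (sq ‖x‖).symm
          have e3 : ‖((t : ℂ) ^ 2) • (1 : 𝔄)‖ ≤ t ^ 2 := by
            rw [norm_smul]
            simp [← Complex.ofReal_pow, Complex.norm_real, abs_of_nonneg (sq_nonneg t)]
          linarith [e2.le, e3]
    have happ : f (x + c • 1) = v + c := by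
      rw [map_add, map_smul, h1, smul_eq_mul, mul_one, hv]
    have hb : ‖f (x + c • 1)‖ ≤ ‖x + c • 1‖ := by
      calc ‖f (x + c • 1)‖ ≤ ‖f‖ * ‖x + c • 1‖ := f.le_opNorm _
      _ ≤ 1 * ‖x + c • 1‖ := by
          exact mul_le_mul_of_nonneg_right hf (norm_nonneg _)
      _ = ‖x + c • 1‖ := one_mul _
    have hb2 : ‖v + c‖ ^ 2 ≤ ‖x‖ ^ 2 + t ^ 2 := by
      rw [← happ]
      calc ‖f (x + c • 1)‖ ^ 2 ≤ ‖x + c • 1‖ ^ 2 :=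
            pow_le_pow_left₀ (norm_nonneg _) hb 2
      _ ≤ ‖x‖ ^ 2 + t ^ 2 := hnorm2
    have e4 : ‖v + c‖ ^ 2 = v.re ^ 2 + (v.im + t) ^ 2 := by
      rw [Complex.sq_norm, Complex.normSq_apply]
      simp [hc]
      ring
    linarith [e4 ▸ hb2]
  by_contra him
  have hkey := key ((‖x‖ ^ 2 + 1 - v.re ^ 2 - v.im ^ 2) / (2 * v.im))
  set T : ℝ := (‖x‖ ^ 2 + 1 - v.re ^ 2 - v.im ^ 2) / (2 * v.im) with hT
  have h2 : 2 * T * v.im = ‖x‖ ^ 2 + 1 - v.re ^ 2 - v.im ^ 2 := by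
    rw [hT]
    field_simp
  nlinarith [hkey]

lemma apply_nonneg_of_norm_le_one [Nontrivial 𝔄] {f : 𝔄 →L[ℂ] ℂ} (hf : ‖f‖ ≤ 1) (h1 : f 1 = 1)
    {x : 𝔄} (hx : 0 ≤ x) : 0 ≤ f x := by
  have hsa : IsSelfAdjoint x := .of_nonneg hx
  have him : (f x).im = 0 := im_eq_zero_of_norm_le_one hf h1 hsa
  set r : ℝ := ‖x‖ / 2 with hr
  have hrnn : 0 ≤ r := by positivity
  have hxr : x - (r : ℂ) • 1 = cfc (fun s : ℝ => s - r) x := by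
    rw [cfc_sub (fun s : ℝ => s) (fun _ : ℝ => r) x (by fun_prop) (by fun_prop),
      cfc_id' ℝ x, cfc_const r x]
    congr 1
    rw [Algebra.algebraMap_eq_smul_one, ← Complex.coe_smul]
  have hnorm : ‖x - (r : ℂ) • 1‖ ≤ r := by
    rw [hxr]
    refine norm_cfc_le hrnn fun s hs => ?_
    have hs0 : 0 ≤ s := spectrum_nonneg_of_nonneg hx hs
    have hs1 : s ≤ ‖x‖ := by
      have := spectrum.norm_le_norm_of_mem (𝕜 := ℝ) hs
      exact (abs_le.mp (by simpa using this)).2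
    rw [Real.norm_eq_abs, abs_le]
    constructor <;> [linarith [hs0]; skip]
    rw [hr]; linarith
  have happ : f (x - (r : ℂ) • 1) = f x - (r : ℂ) := by
    rw [map_sub, map_smul, h1, smul_eq_mul, mul_one]
  have hb : ‖f x - (r : ℂ)‖ ≤ r := by
    rw [← happ]
    calc ‖f (x - (r : ℂ) • 1)‖ ≤ ‖f‖ * ‖x - (r : ℂ) • 1‖ := f.le_opNorm _
    _ ≤ 1 * r := mul_le_mul hf hnorm (norm_nonneg _) zero_le_one
    _ = r := one_mul r
  have hre : |(f x).re - r| ≤ r := by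
    have : ‖f x - (r : ℂ)‖ = |(f x).re - r| := by
      rw [← Real.norm_eq_abs, ← Complex.norm_real]
      congr 1
      rw [Complex.ext_iff]
      simp [him]
    rwa [this] at hb
  rw [Complex.le_def]
  refine ⟨?_, him.symm⟩
  simp only [Complex.zero_re]
  have := (abs_le.mp hre).1
  linarith

lemma isState_of_norm_le_one [Nontrivial 𝔄] {f : 𝔄 →L[ℂ] ℂ} (hf : ‖f‖ ≤ 1)
    (h1 : f 1 = 1) : IsState f := by
  refine ⟨le_antisymm hf ?_, fun a => apply_nonneg_of_norm_le_one hf h1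
    (star_mul_self_nonneg a)⟩
  calc (1 : ℝ) = ‖f 1‖ := by rw [h1]; simp
  _ ≤ ‖f‖ * ‖(1 : 𝔄)‖ := f.le_opNorm 1
  _ = ‖f‖ := by rw [norm_one, mul_one]

/-! ### Existence of states attaining spectral values -/

lemma exists_state_apply_eq [Nontrivial 𝔄] (a : 𝔄) {lam : ℝ}
    (hlam : (lam : ℂ) ∈ spectrum ℂ a) :
    ∃ g : 𝔄 →L[ℂ] ℂ, IsState g ∧ g a = (lam : ℂ) := by
  classical
  set L : ℂ × ℂ →ₗ[ℂ] 𝔄 :=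
    { toFun := fun p => p.1 • (1 : 𝔄) + p.2 • a
      map_add' := by intro p q; simp [add_smul]; abel
      map_smul' := by intro c p; simp [smul_smul, smul_add] } with hL
  set M : ℂ × ℂ →ₗ[ℂ] ℂ :=
    { toFun := fun p => p.1 + p.2 * lam
      map_add' := by intro p q; simp; ring
      map_smul' := by intro c p; simp; ring } with hM
  have key : ∀ p : ℂ × ℂ, M p ∈ spectrum ℂ (L p) := by
    rintro ⟨α, β⟩
    by_cases hβ : β = 0
    · have : L (α, β) = algebraMap ℂ 𝔄 α := by
        simp [hL, hβ, Algebra.algebraMap_eq_smul_one]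
      rw [this]
      simp [hM, hβ, spectrum.scalar_eq]
    · have h1 : α + β * lam ∈ {α} + β • spectrum ℂ a := by
        refine Set.add_mem_add (Set.mem_singleton α) ?_
        exact ⟨(lam : ℂ), hlam, rfl⟩
      have h2 : β • spectrum ℂ a = spectrum ℂ (β • a) := by
        have h := spectrum.unit_smul_eq_smul a (Units.mk0 β hβ)
        rw [Units.smul_def, Units.smul_def] at h
        simpa using h.symm
      have h3 : {α} + spectrum ℂ (β • a) = spectrum ℂ (algebraMap ℂ 𝔄 α + β • a) :=
        spectrum.singleton_add_eq (β • a) α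
      have h4 : L (α, β) = algebraMap ℂ 𝔄 α + β • a := by
        simp [hL, Algebra.algebraMap_eq_smul_one]
      rw [h4]
      rw [h2, h3] at h1
      simpa [hM] using h1
  have bound : ∀ p : ℂ × ℂ, ‖M p‖ ≤ ‖L p‖ := fun p =>
    spectrum.norm_le_norm_of_mem (key p)
  have hker : LinearMap.ker L ≤ LinearMap.ker M := by
    intro p hp
    rw [LinearMap.mem_ker] at hp ⊢
    have := bound p
    rw [hp, norm_zero] at this
    exact norm_le_zero_iff.mp this
  set e := L.quotKerEquivRange with he
  set f₁ : LinearMap.range L →ₗ[ℂ] ℂ :=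
    (Submodule.liftQ (LinearMap.ker L) M hker).comp
      (e.symm : LinearMap.range L →ₗ[ℂ] (ℂ × ℂ) ⧸ LinearMap.ker L) with hf₁
  have hf₁app : ∀ p : ℂ × ℂ, f₁ ⟨L p, LinearMap.mem_range_self L p⟩ = M p := by
    intro p
    have h5 : e (Submodule.Quotient.mk p) = ⟨L p, LinearMap.mem_range_self L p⟩ :=
      Subtype.ext (L.quotKerEquivRange_apply_mk p)
    rw [hf₁]
    simp only [LinearMap.coe_comp, Function.comp_apply, LinearEquiv.coe_coe]
    rw [← h5, LinearEquiv.symm_apply_apply, Submodule.liftQ_apply]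
  have hf₁bound : ∀ x : LinearMap.range L, ‖f₁ x‖ ≤ 1 * ‖x‖ := by
    rintro ⟨x, hx⟩
    obtain ⟨p, rfl⟩ := hx
    rw [one_mul]
    have : (⟨L p, LinearMap.mem_range_self L p⟩ : LinearMap.range L) = ⟨L p, ⟨p, rfl⟩⟩ := rfl
    rw [← this, hf₁app p]
    simpa using bound p
  set f₂ : LinearMap.range L →L[ℂ] ℂ := LinearMap.mkContinuous f₁ 1 hf₁bound with hf₂
  obtain ⟨g, hg_ext, hg_norm⟩ := exists_extension_norm_eq (LinearMap.range L) f₂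
  have hf₂norm : ‖f₂‖ ≤ 1 := LinearMap.mkContinuous_norm_le f₁ zero_le_one hf₁bound
  have h1v : L (1, 0) = (1 : 𝔄) := by simp [hL]
  have hav : L (0, 1) = a := by simp [hL]
  have hg1 : g 1 = 1 := by
    have := hg_ext ⟨L (1, 0), LinearMap.mem_range_self L (1, 0)⟩
    rw [hf₂] at this
    simp only [LinearMap.mkContinuous_apply] at this
    rw [hf₁app (1, 0)] at this
    simpa [h1v, hM] using this
  have hga : g a = (lam : ℂ) := by
    have := hg_ext ⟨L (0, 1), LinearMap.mem_range_self L (0, 1)⟩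
    rw [hf₂] at this
    simp only [LinearMap.mkContinuous_apply] at this
    rw [hf₁app (0, 1)] at this
    simpa [hav, hM] using this
  exact ⟨g, isState_of_norm_le_one (hg_norm ▸ hf₂norm) hg1, hga⟩

/-! ### States detect positivity -/

lemma nonneg_of_forall_state [Nontrivial 𝔄] {s : 𝔄} (hs : IsSelfAdjoint s)
    (h : ∀ g : 𝔄 →L[ℂ] ℂ, IsState g → 0 ≤ (g s).re) : 0 ≤ s := by
  rw [StarOrderedRing.nonneg_iff_spectrum_nonneg (R := ℝ) s hs]
  intro lam hlam
  have hlamℂ : (lam : ℂ) ∈ spectrum ℂ s := by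
    have := spectrum.algebraMap_mem ℂ hlam
    simpa using this
  obtain ⟨g, hg, hga⟩ := exists_state_apply_eq s hlamℂ
  have := h g hg
  rw [hga] at this
  simpa using this

/-! ### Auxiliary order facts -/

lemma smul_nonneg_cstar {r : ℝ} (hr : 0 ≤ r) {z : 𝔄} (hz : 0 ≤ z) : 0 ≤ r • z := by
  have key : r • z = star (Real.sqrt r • CFC.sqrt z) * (Real.sqrt r • CFC.sqrt z) := by
    rw [star_smul, star_trivial, smul_mul_smul_comm, Real.mul_self_sqrt hr,
      (IsSelfAdjoint.of_nonneg (CFC.sqrt_nonneg _)).star_eq, CFC.sqrt_mul_sqrt_self z hz]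
  rw [key]
  exact star_mul_self_nonneg _

lemma smul_le_smul_cstar {r : ℝ} (hr : 0 ≤ r) {x y : 𝔄} (hxy : x ≤ y) :
    r • x ≤ r • y := by
  rw [← sub_nonneg, ← smul_sub]
  exact smul_nonneg_cstar hr (sub_nonneg.2 hxy)

/-! ### Real analysis estimates -/

lemma est_R1 {t ε : ℝ} (ht : 0 ≤ t) (hε : 0 < ε) :
    |Real.sqrt t * (Real.sqrt (Real.sqrt t) / Real.sqrt (t + ε)) -
      Real.sqrt (Real.sqrt t)| ≤ Real.sqrt (Real.sqrt ε) := by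
  set a := Real.sqrt t with ha
  set b := Real.sqrt (t + ε) with hb
  set a4 := Real.sqrt a with ha4
  set e4 := Real.sqrt (Real.sqrt ε) with he4
  have ha2 : a ^ 2 = t := Real.sq_sqrt ht
  have hb2 : b ^ 2 = t + ε := Real.sq_sqrt (by linarith)
  have ha0 : 0 ≤ a := Real.sqrt_nonneg t
  have hb0 : 0 < b := Real.sqrt_pos.2 (by linarith)
  have ha40 : 0 ≤ a4 := Real.sqrt_nonneg a
  have he40 : 0 ≤ e4 := Real.sqrt_nonneg _
  have hab : a ≤ b := Real.sqrt_le_sqrt (by linarith)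
  have ha42 : a4 ^ 2 = a := Real.sq_sqrt ha0
  have hval : a * (a4 / b) - a4 = -(a4 * (b - a) / b) := by
    field_simp
    ring
  rw [hval, abs_neg,
    abs_of_nonneg (div_nonneg (mul_nonneg ha40 (sub_nonneg.2 hab)) hb0.le)]
  -- goal : a4 * (b - a) / b ≤ e4
  rcases le_total t ε with hte | het
  · -- small t : bound by a4 ≤ e4
    have h1 : a4 ≤ e4 := by
      rw [ha4, he4]
      exact Real.sqrt_le_sqrt (Real.sqrt_le_sqrt hte)
    have h2 : a4 * (b - a) / b ≤ a4 := by
      rw [div_le_iff₀ hb0]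
      nlinarith
    linarith
  · -- large t
    have ht0 : 0 < t := lt_of_lt_of_le hε het
    have ha0' : 0 < a := Real.sqrt_pos.2 ht0
    have ha40' : 0 < a4 := Real.sqrt_pos.2 ha0'
    have he4' : 0 < e4 := Real.sqrt_pos.2 (Real.sqrt_pos.2 hε)
    -- a4 * ε ≤ e4 * t
    have hq : a4 * ε ≤ e4 * t := by
      have h4 : (a4 * ε) ^ 4 ≤ (e4 * t) ^ 4 := by
        have ea : a4 ^ 4 = t := by
          have h' : a4 ^ 4 = (a4 ^ 2) ^ 2 := by ring
          rw [h', ha42, ha2]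
        have ee : e4 ^ 4 = ε := by
          have h' : e4 ^ 4 = (e4 ^ 2) ^ 2 := by ring
          rw [h', Real.sq_sqrt (Real.sqrt_nonneg ε), Real.sq_sqrt hε.le]
        have e1 : (a4 * ε) ^ 4 = t * ε ^ 4 := by rw [mul_pow, ea]
        have e2 : (e4 * t) ^ 4 = ε * t ^ 4 := by rw [mul_pow, ee]
        rw [e1, e2]
        have h3 : ε ^ 3 ≤ t ^ 3 := pow_le_pow_left₀ hε.le het 3
        calc t * ε ^ 4 = (ε * t) * ε ^ 3 := by ring
        _ ≤ (ε * t) * t ^ 3 :=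
            mul_le_mul_of_nonneg_left h3 (by positivity)
        _ = ε * t ^ 4 := by ring
      exact le_of_pow_le_pow_left₀ (by norm_num) (by positivity) h4
    -- b - a = ε / (b + a)
    have hba : b - a = ε / (b + a) := by
      rw [eq_div_iff (by positivity)]
      nlinarith
    have hden : t ≤ (b + a) * b := by nlinarith
    rw [hba, ← mul_div_assoc, div_div, div_le_iff₀ (by positivity)]
    calc a4 * ε ≤ e4 * t := hq
    _ ≤ e4 * ((b + a) * b) := mul_le_mul_of_nonneg_left hden he40

lemma est_R2 {t ε : ℝ} (ht : 0 ≤ t) (hε : 0 < ε) :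
    (Real.sqrt t / Real.sqrt (t + ε) - 1) ^ 2 * t ≤ ε := by
  set a := Real.sqrt t with ha
  set b := Real.sqrt (t + ε) with hb
  have ha2 : a ^ 2 = t := Real.sq_sqrt ht
  have hb2 : b ^ 2 = t + ε := Real.sq_sqrt (by linarith)
  have ha0 : 0 ≤ a := Real.sqrt_nonneg t
  have hb0 : 0 < b := Real.sqrt_pos.2 (by linarith)
  have hab : a ≤ b := Real.sqrt_le_sqrt (by linarith)
  have habt : t ≤ a * b := by nlinarith
  have hrw : a / b - 1 = (a - b) / b := by field_simp
  rw [hrw, div_pow, div_mul_eq_mul_div, div_le_iff₀ (by positivity)]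
  nlinarith

lemma est_R3 {t ε : ℝ} (ht : 0 ≤ t) (hε : 0 < ε) :
    (Real.sqrt (Real.sqrt t) / Real.sqrt (t + ε)) ^ 2 * t ≤ Real.sqrt t := by
  set a := Real.sqrt t with ha
  set b := Real.sqrt (t + ε) with hb
  set a4 := Real.sqrt a with ha4
  have ha0 : 0 ≤ a := Real.sqrt_nonneg t
  have hb2 : b ^ 2 = t + ε := Real.sq_sqrt (by linarith)
  have hb0 : 0 < b := Real.sqrt_pos.2 (by linarith)
  have ha42 : a4 ^ 2 = a := Real.sq_sqrt ha0
  rw [div_pow, ha42, hb2, div_mul_eq_mul_div, div_le_iff₀ (by linarith)]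
  nlinarith

/-! ### The Blackadar-type factorization -/

lemma blackadar_factorization (A b : 𝔄) (hA : 0 ≤ A) {c : ℝ} (hc : 0 < c)
    (hb : star b * b ≤ c • A) :
    ∃ U : 𝔄, b = U * CFC.sqrt (CFC.sqrt A) ∧ star U * U ≤ c • CFC.sqrt A := by
  have hAsa : IsSelfAdjoint A := .of_nonneg hA
  have hspec : ∀ t ∈ spectrum ℝ A, (0 : ℝ) ≤ t := fun t ht =>
    spectrum_nonneg_of_nonneg hA ht
  -- the quarter-root function and the approximations
  set s4 : ℝ → ℝ := fun t => Real.sqrt (Real.sqrt t) with hs4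
  have hs4cont : Continuous s4 := by fun_prop
  set gf : ℝ → ℝ → ℝ := fun ε t => s4 t / Real.sqrt (t + ε) with hgf
  have hgcont : ∀ ε : ℝ, 0 < ε → ContinuousOn (gf ε) (spectrum ℝ A) := by
    intro ε hε
    apply ContinuousOn.div hs4cont.continuousOn (by fun_prop)
    intro t ht
    have := hspec t ht
    exact ne_of_gt (Real.sqrt_pos.2 (by linarith))
  -- conjugation estimate
  have conj_est : ∀ φ : ℝ → ℝ, ContinuousOn φ (spectrum ℝ A) →
      star (b * cfc φ A) * (b * cfc φ A) ≤ c • cfc (fun t => φ t ^ 2 * t) A := by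
    intro φ hφ
    have hesa : IsSelfAdjoint (cfc φ A) := cfc_predicate φ A
    have h1 : star (b * cfc φ A) * (b * cfc φ A)
        = star (cfc φ A) * (star b * b) * cfc φ A := by
      rw [star_mul]
      noncomm_ring
    have h2 : star (cfc φ A) * (star b * b) * cfc φ A
        ≤ star (cfc φ A) * (c • A) * cfc φ A := star_left_conjugate_le_conjugate hb _
    have h3 : star (cfc φ A) * (c • A) * cfc φ A
        = c • (cfc φ A * A * cfc φ A) := by
      rw [hesa.star_eq, mul_smul_comm, smul_mul_assoc]
    have h4 : cfc (fun t => φ t ^ 2 * t) A = cfc φ A * A * cfc φ A := by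
      calc cfc (fun t => φ t ^ 2 * t) A = cfc (fun t => (φ t * t) * φ t) A :=
            cfc_congr fun t _ => by ring
      _ = cfc (fun t => φ t * t) A * cfc φ A :=
            cfc_mul _ _ A (hφ.mul (by fun_prop)) hφ
      _ = (cfc φ A * cfc (fun t : ℝ => t) A) * cfc φ A := by
            rw [cfc_mul φ _ A hφ (by fun_prop)]
      _ = cfc φ A * A * cfc φ A := by rw [cfc_id' ℝ A]
    rw [h1, h4, ← h3]
    exact h2
  -- master norm estimate
  have master : ∀ φ : ℝ → ℝ, ContinuousOn φ (spectrum ℝ A) → ∀ K : ℝ, 0 ≤ K →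
      (∀ t ∈ spectrum ℝ A, φ t ^ 2 * t ≤ K) → ‖b * cfc φ A‖ ^ 2 ≤ c * K := by
    intro φ hφ K hK hbd
    have h1 := conj_est φ hφ
    have h0 : (0 : 𝔄) ≤ star (b * cfc φ A) * (b * cfc φ A) := star_mul_self_nonneg _
    have h2 : ‖star (b * cfc φ A) * (b * cfc φ A)‖ ≤ c * K := by
      calc ‖star (b * cfc φ A) * (b * cfc φ A)‖
          ≤ ‖c • cfc (fun t => φ t ^ 2 * t) A‖ :=
            CStarAlgebra.norm_le_norm_of_nonneg_of_le h0 h1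
      _ = c * ‖cfc (fun t => φ t ^ 2 * t) A‖ := by
          rw [norm_smul, Real.norm_eq_abs, abs_of_pos hc]
      _ ≤ c * K := by
          refine mul_le_mul_of_nonneg_left ?_ hc.le
          refine norm_cfc_le hK fun t ht => ?_
          rw [Real.norm_eq_abs, abs_of_nonneg (mul_nonneg (sq_nonneg _) (hspec t ht))]
          exact hbd t ht
    calc ‖b * cfc φ A‖ ^ 2 = ‖star (b * cfc φ A) * (b * cfc φ A)‖ := by
          rw [CStarRing.norm_star_mul_self, sq]
    _ ≤ c * K := h2
  -- the approximating sequence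
  set εs : ℕ → ℝ := fun n => 1 / (n + 1) with hεs
  have hεpos : ∀ n : ℕ, (0 : ℝ) < εs n := fun n => by positivity
  set u : ℕ → 𝔄 := fun n => b * cfc (gf (εs n)) A with hu
  -- Cauchy estimate
  have hdiff : ∀ m n : ℕ, u m - u n
      = b * cfc (fun t => gf (εs m) t - gf (εs n) t) A := by
    intro m n
    rw [hu, ← mul_sub,
      cfc_sub (gf (εs m)) (gf (εs n)) A (hgcont _ (hεpos m)) (hgcont _ (hεpos n))]
  have hcauchy_bound : ∀ m n N : ℕ, N ≤ m → N ≤ n →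
      dist (u m) (u n) ≤ 2 * Real.sqrt c * s4 (εs N) := by
    intro m n N hm hn
    have hKnn : (0 : ℝ) ≤ (s4 (εs m) + s4 (εs n)) ^ 2 := sq_nonneg _
    have hbd : ∀ t ∈ spectrum ℝ A,
        (gf (εs m) t - gf (εs n) t) ^ 2 * t ≤ (s4 (εs m) + s4 (εs n)) ^ 2 := by
      intro t ht
      have ht0 := hspec t ht
      have h1 := est_R1 ht0 (hεpos m)
      have h2 := est_R1 ht0 (hεpos n)
      have ha2 : Real.sqrt t ^ 2 = t := Real.sq_sqrt ht0
      have hrw : (Real.sqrt t * gf (εs m) t - Real.sqrt t * gf (εs n) t) ^ 2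
          = (gf (εs m) t - gf (εs n) t) ^ 2 * t := by
        rw [show (Real.sqrt t * gf (εs m) t - Real.sqrt t * gf (εs n) t) ^ 2
          = (gf (εs m) t - gf (εs n) t) ^ 2 * Real.sqrt t ^ 2 from by ring, ha2]
      rw [← hrw]
      have h1' := abs_le.mp h1
      have h2' := abs_le.mp h2
      nlinarith [h1'.1, h1'.2, h2'.1, h2'.2]
    have hsq : ‖b * cfc (fun t => gf (εs m) t - gf (εs n) t) A‖ ^ 2
        ≤ c * (s4 (εs m) + s4 (εs n)) ^ 2 := by
      refine master _ ?_ _ hKnn hbd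
      exact (hgcont _ (hεpos m)).sub (hgcont _ (hεpos n))
    have hnorm : dist (u m) (u n) ≤ Real.sqrt c * (s4 (εs m) + s4 (εs n)) := by
      rw [dist_eq_norm, hdiff m n]
      have h3 : ‖b * cfc (fun t => gf (εs m) t - gf (εs n) t) A‖
          ≤ Real.sqrt (c * (s4 (εs m) + s4 (εs n)) ^ 2) := by
        rw [← Real.sqrt_sq (norm_nonneg _)]
        exact Real.sqrt_le_sqrt hsq
      rwa [Real.sqrt_mul hc.le, Real.sqrt_sq (by positivity)] at h3
    have hmono : ∀ k : ℕ, N ≤ k → s4 (εs k) ≤ s4 (εs N) := by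
      intro k hk
      rw [hs4, hεs]
      refine Real.sqrt_le_sqrt (Real.sqrt_le_sqrt ?_)
      have : (N : ℝ) + 1 ≤ (k : ℝ) + 1 := by exact_mod_cast by omega
      exact one_div_le_one_div_of_le (by positivity) this
    calc dist (u m) (u n) ≤ Real.sqrt c * (s4 (εs m) + s4 (εs n)) := hnorm
    _ ≤ Real.sqrt c * (s4 (εs N) + s4 (εs N)) := by
        refine mul_le_mul_of_nonneg_left ?_ (Real.sqrt_nonneg c)
        linarith [hmono m hm, hmono n hn]
    _ = 2 * Real.sqrt c * s4 (εs N) := by ring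
  have htends4 : Filter.Tendsto (fun N : ℕ => 2 * Real.sqrt c * s4 (εs N))
      Filter.atTop (nhds 0) := by
    have h0 : Filter.Tendsto εs Filter.atTop (nhds 0) :=
      tendsto_one_div_add_atTop_nhds_zero_nat
    have h1 : Filter.Tendsto (fun N => s4 (εs N)) Filter.atTop (nhds 0) := by
      have := (hs4cont.tendsto 0).comp h0
      simpa [hs4, Function.comp_def] using this
    have := h1.const_mul (2 * Real.sqrt c)
    simpa using this
  have hCauchy : CauchySeq u := cauchySeq_of_le_tendsto_0 _ hcauchy_bound htends4
  obtain ⟨U, hU⟩ := cauchySeq_tendsto_of_complete hCauchy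
  -- identify the roots with cfc's
  have hsqrt_mul : cfc Real.sqrt A * cfc Real.sqrt A = A := by
    rw [← cfc_mul Real.sqrt Real.sqrt A (by fun_prop) (by fun_prop)]
    calc cfc (fun t => Real.sqrt t * Real.sqrt t) A = cfc (id : ℝ → ℝ) A :=
          cfc_congr fun t ht => Real.mul_self_sqrt (hspec t ht)
    _ = A := cfc_id ℝ A
  have hq : CFC.sqrt A = cfc Real.sqrt A :=
    CFC.sqrt_unique hsqrt_mul (cfc_nonneg fun t _ => Real.sqrt_nonneg _)
  have hr4_mul : cfc s4 A * cfc s4 A = cfc Real.sqrt A := by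
    rw [← cfc_mul s4 s4 A (by fun_prop) (by fun_prop)]
    exact cfc_congr fun t _ => Real.mul_self_sqrt (Real.sqrt_nonneg t)
  have hr : CFC.sqrt (CFC.sqrt A) = cfc s4 A := by
    rw [hq]
    exact CFC.sqrt_unique hr4_mul (cfc_nonneg fun t _ => Real.sqrt_nonneg _)
  refine ⟨U, ?_, ?_⟩
  · -- b = U * A^{1/4}
    rw [hr]
    have hterm : ∀ n : ℕ, u n * cfc s4 A
        = b * cfc (fun t => gf (εs n) t * s4 t) A := by
      intro n
      rw [hu, mul_assoc, cfc_mul (gf (εs n)) s4 A (hgcont _ (hεpos n)) (by fun_prop)]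
    have hbound2 : ∀ n : ℕ, ‖u n * cfc s4 A - b‖ ^ 2 ≤ c * εs n := by
      intro n
      have hrw : u n * cfc s4 A - b
          = b * cfc (fun t => gf (εs n) t * s4 t - 1) A := by
        rw [hterm n]
        have h1 : cfc (fun t => gf (εs n) t * s4 t - 1) A
            = cfc (fun t => gf (εs n) t * s4 t) A - 1 := by
          rw [cfc_sub (fun t => gf (εs n) t * s4 t) (fun _ => (1 : ℝ)) A
            ((hgcont _ (hεpos n)).mul (by fun_prop)) (by fun_prop)]
          congr 1
          exact cfc_one ℝ A
        rw [h1, mul_sub, mul_one]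
      rw [hrw]
      refine master _ (((hgcont _ (hεpos n)).mul (by fun_prop)).sub (by fun_prop))
        _ (hεpos n).le fun t ht => ?_
      have ht0 := hspec t ht
      have hval : gf (εs n) t * s4 t = Real.sqrt t / Real.sqrt (t + εs n) := by
        rw [hgf]
        simp only
        rw [div_mul_eq_mul_div, Real.mul_self_sqrt (Real.sqrt_nonneg t)]
      show (gf (εs n) t * s4 t - 1) ^ 2 * t ≤ εs n
      rw [hval]
      exact est_R2 ht0 (hεpos n)
    have htend1 : Filter.Tendsto (fun n => u n * cfc s4 A) Filter.atTop (nhds b) := by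
      rw [tendsto_iff_norm_sub_tendsto_zero]
      have hb1 : ∀ n : ℕ, ‖u n * cfc s4 A - b‖ ≤ Real.sqrt (c * εs n) := by
        intro n
        rw [← Real.sqrt_sq (norm_nonneg _)]
        exact Real.sqrt_le_sqrt (hbound2 n)
      refine squeeze_zero (fun n => norm_nonneg _) hb1 ?_
      have h0 : Filter.Tendsto (fun n => c * εs n) Filter.atTop (nhds 0) := by
        have := tendsto_one_div_add_atTop_nhds_zero_nat.const_mul c
        simpa [hεs] using this
      have := (Real.continuous_sqrt.tendsto 0).comp h0
      simpa [Function.comp_def] using this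
    have htend2 : Filter.Tendsto (fun n => u n * cfc s4 A) Filter.atTop
        (nhds (U * cfc s4 A)) := hU.mul_const _
    exact tendsto_nhds_unique htend1 htend2
  · -- star U * U ≤ c • A^{1/2}
    rw [hq]
    have hn : ∀ n : ℕ, star (u n) * u n ≤ c • cfc Real.sqrt A := by
      intro n
      calc star (u n) * u n ≤ c • cfc (fun t => gf (εs n) t ^ 2 * t) A :=
            conj_est _ (hgcont _ (hεpos n))
      _ ≤ c • cfc Real.sqrt A := by
          refine smul_le_smul_cstar hc.le ?_
          rw [← sub_nonneg, ← cfc_sub Real.sqrt (fun t => gf (εs n) t ^ 2 * t) A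
            (by fun_prop) (((hgcont _ (hεpos n)).pow 2).mul (by fun_prop))]
          exact cfc_nonneg fun t ht => sub_nonneg.2 (est_R3 (hspec t ht) (hεpos n))
    have htendsU : Filter.Tendsto (fun n => star (u n) * u n) Filter.atTop
        (nhds (star U * U)) := hU.star.mul hU
    have hclosed : IsClosed {x : 𝔄 | x ≤ c • cfc Real.sqrt A} := by
      have he : {x : 𝔄 | x ≤ c • cfc Real.sqrt A}
          = (fun x => c • cfc Real.sqrt A - x) ⁻¹' {y : 𝔄 | 0 ≤ y} := by
        ext x; simp [sub_nonneg]
      rw [he]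
      exact CStarAlgebra.isClosed_nonneg.preimage (continuous_const.sub continuous_id)
    exact hclosed.mem_of_tendsto htendsU (Filter.Eventually.of_forall hn)

end Aux

/-- `X ∈ 𝔄^A` iff there are `c > 0` and `U ∈ 𝔄` with `A^{1/2} X = U A^{1/4}` and
`U* U ≤ c A^{1/2}`. -/
theorem mem_AA_iff_factorization {𝔄 : Type*} [CStarAlgebra 𝔄] [PartialOrder 𝔄]
    [StarOrderedRing 𝔄] (A X : 𝔄) (hA : 0 ≤ A) (hA0 : A ≠ 0) :
    Anorm A X ≠ ⊤ ↔
      ∃ c : ℝ, 0 < c ∧ ∃ U : 𝔄,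
        CFC.sqrt A * X = U * CFC.sqrt (CFC.sqrt A) ∧
        star U * U ≤ c • CFC.sqrt A := by
  haveI : Nontrivial 𝔄 := nontrivial_of_ne A 0 hA0
  have hqsa : IsSelfAdjoint (CFC.sqrt A) := .of_nonneg (CFC.sqrt_nonneg _)
  have hfactor : star X * A * X = star (CFC.sqrt A * X) * (CFC.sqrt A * X) := by
    rw [star_mul, hqsa.star_eq]
    simp only [mul_assoc]
    rw [← mul_assoc (CFC.sqrt A) (CFC.sqrt A) X, CFC.sqrt_mul_sqrt_self A hA]
  have hXAX : (0 : 𝔄) ≤ star X * A * X := hfactor ▸ star_mul_self_nonneg _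
  have hXAXsa : IsSelfAdjoint (star X * A * X) := .of_nonneg hXAX
  have hfApos : ∀ f : 𝔄 →L[ℂ] ℂ, IsState f → f A ≠ 0 → 0 < (f A).re := by
    intro f hf hfA
    obtain ⟨h1, h2⟩ := hf.re_nonneg hA
    rcases h1.lt_or_eq with h | h
    · exact h
    · exact absurd (Complex.ext h.symm h2) hfA
  constructor
  · -- forward direction
    intro htop
    set M : ℝ := (Anorm A X).toReal with hM
    set c : ℝ := M ^ 2 + 1 with hc
    have hcpos : 0 < c := by positivity
    have key1 : ∀ f : 𝔄 →L[ℂ] ℂ, (hf : IsState f) → (hfA : f A ≠ 0) →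
        (f (star X * A * X)).re ≤ M ^ 2 * (f A).re := by
      intro f hf hfA
      have hle : ENNReal.ofReal
          (Real.sqrt ((f (star X * A * X)).re / (f A).re)) ≤ Anorm A X :=
        le_iSup (fun F : {f : 𝔄 →L[ℂ] ℂ // IsState f ∧ f A ≠ 0} =>
          ENNReal.ofReal (Real.sqrt ((F.1 (star X * A * X)).re / (F.1 A).re)))
          ⟨f, hf, hfA⟩
      have hsqrtle : Real.sqrt ((f (star X * A * X)).re / (f A).re) ≤ M := by
        have := ENNReal.toReal_mono htop hle
        rwa [ENNReal.toReal_ofReal (Real.sqrt_nonneg _)] at this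
      have hpos := hfApos f hf hfA
      have hXnn : 0 ≤ (f (star X * A * X)).re := (hf.re_nonneg hXAX).1
      have hratio_nn : 0 ≤ (f (star X * A * X)).re / (f A).re :=
        div_nonneg hXnn hpos.le
      have hratio : (f (star X * A * X)).re / (f A).re ≤ M ^ 2 := by
        have h1 : ((Real.sqrt ((f (star X * A * X)).re / (f A).re)) ^ 2 : ℝ)
            ≤ M ^ 2 := pow_le_pow_left₀ (Real.sqrt_nonneg _) hsqrtle 2
        rwa [Real.sq_sqrt hratio_nn] at h1
      rwa [div_le_iff₀ hpos] at hratio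
    -- a state with value ‖A‖ at A
    have hAnorm_spec : ‖A‖ ∈ spectrum ℝ A :=
      CStarAlgebra.norm_mem_spectrum_of_nonneg hA
    have hAnormℂ : ((‖A‖ : ℝ) : ℂ) ∈ spectrum ℂ A := by
      have := spectrum.algebraMap_mem ℂ hAnorm_spec
      simpa using this
    obtain ⟨h0, hh0, hh0A⟩ := exists_state_apply_eq A hAnormℂ
    have hAn0 : (0 : ℝ) < ‖A‖ := norm_pos_iff.mpr hA0
    have key2 : ∀ f : 𝔄 →L[ℂ] ℂ, IsState f →
        0 ≤ (f (c • A - star X * A * X)).re := by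
      intro f hf
      have hsmul : ∀ y : 𝔄, f (c • y) = (c : ℂ) * f y := by
        intro y
        rw [← Complex.coe_smul, map_smul, smul_eq_mul]
      by_cases hfA : f A = 0
      · -- the degenerate case : perturb by h0
        have hv0 : 0 ≤ (f (star X * A * X)).re := (hf.re_nonneg hXAX).1
        set v : ℝ := (f (star X * A * X)).re with hvdef
        set w : ℝ := (h0 (star X * A * X)).re with hwdef
        have hbound : ∀ n : ℕ, (1 - 1 / ((n : ℝ) + 1)) * v
            ≤ (1 / ((n : ℝ) + 1)) * (M ^ 2 * ‖A‖ - w) := by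
          intro n
          set t : ℝ := 1 / ((n : ℝ) + 1) with htdef
          have ht0 : 0 < t := by positivity
          have ht1 : t ≤ 1 := by
            rw [htdef]
            rw [div_le_one (by positivity)]
            simp
          set F : 𝔄 →L[ℂ] ℂ := ((1 - t : ℝ) : ℂ) • f + ((t : ℝ) : ℂ) • h0 with hF
          have hFapp : ∀ y : 𝔄, F y = ((1 - t : ℝ) : ℂ) * f y + ((t : ℝ) : ℂ) * h0 y := by
            intro y; simp [hF]
          have hFnorm : ‖F‖ ≤ 1 := by
            calc ‖F‖ ≤ ‖((1 - t : ℝ) : ℂ) • f‖ + ‖((t : ℝ) : ℂ) • h0‖ := norm_add_le _ _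
            _ = (1 - t) * ‖f‖ + t * ‖h0‖ := by
                rw [norm_smul (((1 - t : ℝ) : ℂ)) f, norm_smul (((t : ℝ) : ℂ)) h0,
                  Complex.norm_real, Complex.norm_real, Real.norm_eq_abs,
                  Real.norm_eq_abs, abs_of_nonneg (by linarith : (0:ℝ) ≤ 1 - t),
                  abs_of_pos ht0]
            _ = 1 := by rw [hf.1, hh0.1]; ring
          have hFA : F A = ((t : ℝ) : ℂ) * (‖A‖ : ℂ) := by
            rw [hFapp, hfA, hh0A]; ring
          have hFAre : (F A).re = t * ‖A‖ := by
            rw [hFA, ← Complex.ofReal_mul]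
            simp
          have hFArepos : 0 < (F A).re := by rw [hFAre]; positivity
          have hFne : F ≠ 0 := by
            intro h
            rw [h] at hFArepos
            simp at hFArepos
          have hs0 : 0 < ‖F‖ := norm_pos_iff.mpr hFne
          set G : 𝔄 →L[ℂ] ℂ := ((‖F‖⁻¹ : ℝ) : ℂ) • F with hG
          have hGapp : ∀ y : 𝔄, G y = ((‖F‖⁻¹ : ℝ) : ℂ) * F y := by
            intro y; simp [hG]
          have hGre : ∀ y : 𝔄, (G y).re = ‖F‖⁻¹ * (F y).re := by
            intro y
            rw [hGapp]
            simp [Complex.mul_re]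
          have hGstate : IsState G := by
            constructor
            · rw [hG, norm_smul (((‖F‖⁻¹ : ℝ) : ℂ)) F]
              simp [Complex.norm_real, abs_of_pos (inv_pos.2 hs0)]
              field_simp
            · intro a
              rw [hGapp, hFapp]
              have h1 : 0 ≤ f (star a * a) := hf.2 a
              have h2 : 0 ≤ h0 (star a * a) := hh0.2 a
              have c1 : (0 : ℂ) ≤ ((1 - t : ℝ) : ℂ) := by
                rw [Complex.zero_le_real]; linarith
              have c2 : (0 : ℂ) ≤ ((t : ℝ) : ℂ) := by
                rw [Complex.zero_le_real]; exact ht0.le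
              have c3 : (0 : ℂ) ≤ ((‖F‖⁻¹ : ℝ) : ℂ) := by
                rw [Complex.zero_le_real]; positivity
              exact mul_nonneg c3 (add_nonneg (mul_nonneg c1 h1) (mul_nonneg c2 h2))
          have hGA : G A ≠ 0 := by
            intro h
            have : (G A).re = 0 := by rw [h]; simp
            rw [hGre] at this
            have : (F A).re = 0 := by
              field_simp at this
              simpa using this
            linarith
          have := key1 G hGstate hGA
          rw [hGre, hGre] at this
          have hFineq : (F (star X * A * X)).re ≤ M ^ 2 * (F A).re := by
            have h' := mul_le_mul_of_nonneg_left this hs0.le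
            have e1 : ‖F‖ * (‖F‖⁻¹ * (F (star X * A * X)).re)
                = (F (star X * A * X)).re := by
              field_simp
            have e2 : ‖F‖ * (M ^ 2 * (‖F‖⁻¹ * (F A).re)) = M ^ 2 * (F A).re := by
              field_simp
            rw [e1, e2] at h'
            exact h' 
          have hFXre : (F (star X * A * X)).re = (1 - t) * v + t * w := by
            rw [hFapp]
            simp [Complex.add_re, Complex.mul_re, hvdef, hwdef]
          rw [hFXre, hFAre] at hFineq
          calc (1 - t) * v = ((1 - t) * v + t * w) - t * w := by ring
          _ ≤ M ^ 2 * (t * ‖A‖) - t * w := by linarith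
          _ = t * (M ^ 2 * ‖A‖ - w) := by ring
        have hvle : v ≤ 0 := by
          have htv : Filter.Tendsto (fun n : ℕ => (1 - 1 / ((n : ℝ) + 1)) * v)
              Filter.atTop (nhds v) := by
            have h1 : Filter.Tendsto (fun n : ℕ => 1 - 1 / ((n : ℝ) + 1))
                Filter.atTop (nhds 1) := by
              have := (tendsto_one_div_add_atTop_nhds_zero_nat (𝕜 := ℝ)).const_sub 1
              simpa using this
            have := h1.mul_const v
            simpa using this
          have htw : Filter.Tendsto
              (fun n : ℕ => (1 / ((n : ℝ) + 1)) * (M ^ 2 * ‖A‖ - w))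
              Filter.atTop (nhds 0) := by
            have := tendsto_one_div_add_atTop_nhds_zero_nat.mul_const
              (M ^ 2 * ‖A‖ - w)
            simpa using this
          exact le_of_tendsto_of_tendsto' htv htw hbound
        have hveq : v = 0 := le_antisymm hvle hv0
        rw [map_sub, hsmul]
        simp only [Complex.sub_re]
        have : ((c : ℂ) * f A).re = 0 := by rw [hfA]; simp
        rw [this]
        rw [← hvdef, hveq]
        simp
      · -- the main case
        rw [map_sub, hsmul]
        simp only [Complex.sub_re]
        have h1 : ((c : ℂ) * f A).re = c * (f A).re := by
          simp [Complex.mul_re]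
        rw [h1]
        have h2 := key1 f hf hfA
        have h3 := hfApos f hf hfA
        nlinarith
    have hs0 : (0 : 𝔄) ≤ c • A - star X * A * X := by
      refine nonneg_of_forall_state ?_ key2
      exact ((IsSelfAdjoint.all c).smul (IsSelfAdjoint.of_nonneg hA)).sub hXAXsa
    have hle : star X * A * X ≤ c • A := sub_nonneg.mp hs0
    obtain ⟨U, hU1, hU2⟩ := blackadar_factorization A (CFC.sqrt A * X) hA hcpos
      (by rw [← hfactor]; exact hle)
    exact ⟨c, hcpos, U, hU1, hU2⟩
  · -- backward direction
    rintro ⟨c, hc, U, hU1, hU2⟩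
    set r : 𝔄 := CFC.sqrt (CFC.sqrt A) with hrdef
    have hrsa : IsSelfAdjoint r := .of_nonneg (CFC.sqrt_nonneg _)
    have hrr : r * r = CFC.sqrt A := CFC.sqrt_mul_sqrt_self _ (CFC.sqrt_nonneg _)
    have hle : star X * A * X ≤ c • A := by
      rw [hfactor, hU1]
      have h1 : star (U * r) * (U * r) = star r * (star U * U) * r := by
        rw [star_mul]; noncomm_ring
      have h2 : star r * (star U * U) * r ≤ star r * (c • CFC.sqrt A) * r :=
        star_left_conjugate_le_conjugate hU2 r
      have h3 : star r * (c • CFC.sqrt A) * r = c • A := by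
        rw [hrsa.star_eq, mul_smul_comm, smul_mul_assoc]
        congr 1
        calc r * CFC.sqrt A * r = r * (r * r) * r := by rw [hrr]
        _ = (r * r) * (r * r) := by noncomm_ring
        _ = A := by rw [hrr]; exact CFC.sqrt_mul_sqrt_self A hA
      rw [h1]
      exact h3 ▸ h2
    have hbound : Anorm A X ≤ ENNReal.ofReal (Real.sqrt c) := by
      refine iSup_le fun F => ?_
      obtain ⟨f, hf, hfA⟩ := F
      refine ENNReal.ofReal_le_ofReal (Real.sqrt_le_sqrt ?_)
      have hpos := hfApos f hf hfA
      rw [div_le_iff₀ hpos]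
      calc (f (star X * A * X)).re ≤ (f (c • A)).re := hf.re_mono hle
      _ = c * (f A).re := by
          rw [← Complex.coe_smul, map_smul, smul_eq_mul]
          simp [Complex.mul_re]
    exact ne_top_of_le_ne_top ENNReal.ofReal_ne_top hbound
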